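/- Let S be a unique factorization domain, let F(x) ∈ S[x, x⁻¹] be a Laurent polynomial in x with coefficients in S, and let P be an irreducible element of S. Then there exists a unique integer m ∈ ℤ such that G(x) = xᵐ·F(x) satisfies: (1) G(P/x) is a Laurent polynomial in S[x, x⁻¹], and (2) G(P/x) is not divisible by P in S[x, x⁻¹]. -/

import Mathlib

private theorem aux_dvd_iff {S : Type*} [CommRing S] [IsDomain S] [UniqueFactorizationMonoid S]
    {P : S} (hP : Prime P) {c : S} (hc : c ≠ 0) (k b : ℕ) :
    (∃ s : S, s * P ^ k = c * P ^ b) ↔ k ≤ multiplicity P c + b := by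
  have hfin : FiniteMultiplicity P (c * P ^ b) :=
    FiniteMultiplicity.of_not_isUnit hP.not_isUnit
      (mul_ne_zero hc (pow_ne_zero _ hP.ne_zero))
  have hmul : multiplicity P (c * P ^ b) = multiplicity P c + b := by
    rw [multiplicity_mul hP hfin, multiplicity_pow_self_of_prime hP]
  constructor
  · rintro ⟨s, hs⟩
    have : P ^ k ∣ c * P ^ b := ⟨s, by rw [← hs, mul_comm]⟩
    have := hfin.le_multiplicity_of_pow_dvd this
    omega
  · intro hk
    have : P ^ k ∣ c * P ^ b := hfin.pow_dvd_iff_le_multiplicity.mpr (by omega)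
    obtain ⟨s, hs⟩ := this
    exact ⟨s, by rw [hs, mul_comm]⟩

/-- Let `S` be a UFD, `F` a nonzero Laurent polynomial in `x` over `S` (encoded as a finitely
supported function `ℤ → S` of coefficients), and `P` an irreducible element of `S`.
Then there is a unique `m : ℤ` such that `G(x) = x^m F(x)` satisfies:
(1) `G(P/x)` is a Laurent polynomial over `S` (coefficientwise: the coefficient
`F n * P^(n+m)` of `x^{-(n+m)}` lies in `S`), and
(2) `G(P/x)` is not divisible by `P` in `S[x,x⁻¹]`. -/
theorem stmt0 {S : Type*} [CommRing S] [IsDomain S] [UniqueFactorizationMonoid S]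
    (P : S) (hP : Irreducible P) (F : ℤ → S)
    (hFfin : (Function.support F).Finite) (hF : F ≠ 0) :
    ∃! m : ℤ,
      (∀ n : ℤ, ∃ s : S, s * P ^ (-(n + m)).toNat = F n * P ^ (n + m).toNat) ∧
      ¬ (∀ n : ℤ, ∃ s : S, s * P ^ ((-(n + m)).toNat + 1) = F n * P ^ (n + m).toNat) := by
  have hPp : Prime P := (UniqueFactorizationMonoid.irreducible_iff_prime.mp hP)
  -- translate the conditions
  have key1 : ∀ (m n : ℤ), F n ≠ 0 →
      ((∃ s : S, s * P ^ (-(n + m)).toNat = F n * P ^ (n + m).toNat) ↔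
        -n - (multiplicity P (F n) : ℤ) ≤ m) := by
    intro m n hn
    rw [aux_dvd_iff hPp hn]
    omega
  have key2 : ∀ (m n : ℤ), F n ≠ 0 →
      ((∃ s : S, s * P ^ ((-(n + m)).toNat + 1) = F n * P ^ (n + m).toNat) ↔
        -n - (multiplicity P (F n) : ℤ) + 1 ≤ m) := by
    intro m n hn
    rw [aux_dvd_iff hPp hn]
    omega
  have hzero : ∀ (n : ℤ) (k b : ℕ), F n = 0 → ∃ s : S, s * P ^ k = F n * P ^ b := by
    intro n k b hn
    exact ⟨0, by simp [hn]⟩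
  -- the finset of exponents
  set T : Finset ℤ := hFfin.toFinset with hT
  have hTne : T.Nonempty := by
    rcases Function.ne_iff.mp hF with ⟨n, hn⟩
    exact ⟨n, hFfin.mem_toFinset.mpr (by simpa using hn)⟩
  set I : Finset ℤ := T.image (fun n => -n - (multiplicity P (F n) : ℤ)) with hI
  have hIne : I.Nonempty := hTne.image _
  set M : ℤ := I.max' hIne with hM
  refine ⟨M, ⟨?_, ?_⟩, ?_⟩
  · -- condition (1) for M
    intro n
    by_cases hn : F n = 0
    · exact hzero n _ _ hn
    · refine (key1 M n hn).mpr ?_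
      exact Finset.le_max' I _ (Finset.mem_image_of_mem _ (hFfin.mem_toFinset.mpr hn))
  · -- condition (2) for M
    intro hall
    obtain ⟨n₀, hn₀T, hn₀⟩ := Finset.mem_image.mp (I.max'_mem hIne)
    have hn₀ne : F n₀ ≠ 0 := hFfin.mem_toFinset.mp hn₀T
    have := (key2 M n₀ hn₀ne).mp (hall n₀)
    omega
  · -- uniqueness
    rintro m ⟨h1, h2⟩
    have hge : M ≤ m := by
      obtain ⟨n₀, hn₀T, hn₀⟩ := Finset.mem_image.mp (I.max'_mem hIne)
      have hn₀ne : F n₀ ≠ 0 := hFfin.mem_toFinset.mp hn₀T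
      have := (key1 m n₀ hn₀ne).mp (h1 n₀)
      omega
    have hle : m ≤ M := by
      by_contra hlt
      push_neg at hlt
      apply h2
      intro n
      by_cases hn : F n = 0
      · exact hzero n _ _ hn
      · refine (key2 m n hn).mpr ?_
        have : -n - (multiplicity P (F n) : ℤ) ≤ M :=
          Finset.le_max' I _ (Finset.mem_image_of_mem _ (hFfin.mem_toFinset.mpr hn))
        omega
    omega
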